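/- Let K be a finite set of triangles over a vertex type V, let T ⊆ K be its set of conflict triangles, and let k be a natural number. Suppose there exists a set D ⊆ K with |D| ≤ k such that every 2-element subset of V is an edge of at most two triangles of K \ D. Then |T| ≤ 7k. -/
import Mathlib


open Finset

/-- A triangle `t ∈ K` is a conflict triangle if some edge of `t` (a 2-element
subset of `t`) is an edge of at least three triangles of `K`.
`conflictTriangles K` is the set of conflict triangles of `K`. -/
def conflictTriangles {V : Type*} [DecidableEq V] (K : Finset (Finset V)) :
    Finset (Finset V) :=
  K.filter fun t => ∃ e ∈ t.powerset, e.card = 2 ∧ 3 ≤ (K.filter fun s => e ⊆ s).card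

/-- If at most `k` triangles can be deleted from `K` so that every edge is an edge
of at most two of the remaining triangles, then `K` has at most `7k` conflict
triangles. -/
theorem conflictTriangles_card_le
    {V : Type*} [DecidableEq V] (K : Finset (Finset V))
    (hK : ∀ t ∈ K, t.card = 3) (k : ℕ)
    (hD : ∃ D ⊆ K, D.card ≤ k ∧
      ∀ e : Finset V, e.card = 2 → ((K \ D).filter fun t => e ⊆ t).card ≤ 2) :
    (conflictTriangles K).card ≤ 7 * k := by
  obtain ⟨D, hDK, hDk, hedge⟩ := hD
  have hsub : conflictTriangles K ⊆
      D ∪ D.biUnion (fun d => (d.powerset.filter fun e => e.card = 2).biUnion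
        fun e => (K \ D).filter fun t => e ⊆ t) := by
    intro t ht
    rw [conflictTriangles, mem_filter] at ht
    obtain ⟨htK, e, he, hcard, h3⟩ := ht
    by_cases htD : t ∈ D
    · exact mem_union_left _ htD
    · refine mem_union_right _ ?_
      -- find d ∈ D containing e
      have hnot : ¬ (K.filter fun s => e ⊆ s) ⊆ ((K \ D).filter fun s => e ⊆ s) := by
        intro hss
        have := card_le_card hss
        have h2 := hedge e hcard
        omega
      obtain ⟨d, hd1, hd2⟩ := not_subset.mp hnot
      rw [mem_filter] at hd1
      have hdD : d ∈ D := by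
        by_contra hdD
        exact hd2 (mem_filter.mpr ⟨mem_sdiff.mpr ⟨hd1.1, hdD⟩, hd1.2⟩)
      refine mem_biUnion.mpr ⟨d, hdD, mem_biUnion.mpr ⟨e, ?_, ?_⟩⟩
      · exact mem_filter.mpr ⟨mem_powerset.mpr hd1.2, hcard⟩
      · exact mem_filter.mpr ⟨mem_sdiff.mpr ⟨htK, htD⟩, mem_powerset.mp he⟩
  calc (conflictTriangles K).card
      ≤ _ := card_le_card hsub
    _ ≤ D.card + (D.biUnion (fun d => (d.powerset.filter fun e => e.card = 2).biUnion
        fun e => (K \ D).filter fun t => e ⊆ t)).card := card_union_le _ _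
    _ ≤ k + 6 * k := by
        refine Nat.add_le_add hDk ?_
        calc (D.biUnion _).card
            ≤ ∑ d ∈ D, ((d.powerset.filter fun e => e.card = 2).biUnion
              fun e => (K \ D).filter fun t => e ⊆ t).card := card_biUnion_le
          _ ≤ ∑ _d ∈ D, 6 := by
              refine Finset.sum_le_sum fun d hd => ?_
              calc ((d.powerset.filter fun e => e.card = 2).biUnion
                    fun e => (K \ D).filter fun t => e ⊆ t).card
                  ≤ ∑ e ∈ d.powerset.filter fun e => e.card = 2,
                      ((K \ D).filter fun t => e ⊆ t).card := card_biUnion_le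
                _ ≤ ∑ e ∈ d.powerset.filter fun e => e.card = 2, 2 :=
                    Finset.sum_le_sum fun e he => hedge e (mem_filter.mp he).2
                _ = (d.powerset.filter fun e => e.card = 2).card * 2 := by
                    rw [Finset.sum_const, smul_eq_mul]
                _ ≤ 6 := by
                    have : d.powerset.filter (fun e => e.card = 2) = d.powersetCard 2 := by
                      rw [Finset.powersetCard_eq_filter]
                    rw [this, Finset.card_powersetCard, hK d (hDK hd)]
                    norm_num
          _ = 6 * D.card := by rw [Finset.sum_const]; ring
          _ ≤ 6 * k := Nat.mul_le_mul_left _ hDk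
    _ ≤ 7 * k := by omega
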